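/- Let X be a real inner product space of dimension ≥ 2, λ ≥ 1 a real number, Y a real vector space, B an open ball centered at 0, and f : B \ {0} → Y an odd map satisfying f(λ(x + y)) = λf(x) + λf(y) for all nonzero x, y ∈ B \ {0} with ⟨x, y⟩ = 0 (whenever λ(x+y) ∈ B). Then f(x) = 2λ²·f(x/(2λ²)) for all x ∈ B \ {0}. -/

import Mathlib

theorem stmt_14 {X Y : Type*} [NormedAddCommGroup X] [InnerProductSpace ℝ X]
    [AddCommGroup Y] [Module ℝ Y]
    (hdim : 2 ≤ Module.rank ℝ X)
    (lam : ℝ) (hlam : 1 ≤ lam)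
    (R : ℝ) (hR : 0 < R)
    (f : X → Y)
    (hodd : ∀ x : X, x ≠ 0 → ‖x‖ < R → f (-x) = -f x)
    (heq : ∀ x y : X, x ≠ 0 → y ≠ 0 → ‖x‖ < R → ‖y‖ < R → (inner ℝ x y : ℝ) = 0 →
      ‖lam • (x + y)‖ < R → f (lam • (x + y)) = lam • f x + lam • f y) :
    ∀ x : X, x ≠ 0 → ‖x‖ < R → f x = (2 * lam ^ 2) • f ((2 * lam ^ 2)⁻¹ • x) := by
  intro x hx hxR
  have hlam0 : (0:ℝ) < lam := lt_of_lt_of_le one_pos hlam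
  set c : ℝ := 2 * lam ^ 2 with hc
  have hc1 : (1:ℝ) ≤ c := by nlinarith
  have hcpos : (0:ℝ) < c := lt_of_lt_of_le one_pos hc1
  have hc0 : c ≠ 0 := ne_of_gt hcpos
  set v : X := c⁻¹ • x with hv
  have hv0 : v ≠ 0 := smul_ne_zero (inv_ne_zero hc0) hx
  have hxpos : (0:ℝ) < ‖x‖ := norm_pos_iff.2 hx
  have hvnorm : ‖v‖ = c⁻¹ * ‖x‖ := by
    rw [hv, norm_smul, Real.norm_eq_abs, abs_of_pos (inv_pos.2 hcpos)]
  have hvle : ‖v‖ ≤ ‖x‖ := by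
    rw [hvnorm]
    calc c⁻¹ * ‖x‖ ≤ 1 * ‖x‖ := by
          apply mul_le_mul_of_nonneg_right _ (le_of_lt hxpos)
          rw [inv_le_one_iff₀]; right; exact hc1
      _ = ‖x‖ := one_mul _
  have hvR : ‖v‖ < R := lt_of_le_of_lt hvle hxR
  -- find a vector not in the span of v
  have hspan : ∃ w : X, w ∉ Submodule.span ℝ ({v} : Set X) := by
    by_contra hcon
    push_neg at hcon
    have htop : Submodule.span ℝ ({v} : Set X) = ⊤ :=
      eq_top_iff.2 fun w _ => hcon w
    have h1 : Module.rank ℝ X ≤ 1 := by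
      have h2 := rank_span_le (R := ℝ) ({v} : Set X)
      rw [htop] at h2
      rw [← rank_top ℝ X]
      simpa using h2
    have := hdim.trans h1
    norm_num at this
  obtain ⟨w, hw⟩ := hspan
  set w' : X := w - (((inner ℝ v w : ℝ)) / ‖v‖ ^ 2) • v with hw'
  have hw'0 : w' ≠ 0 := by
    intro h
    apply hw
    have hwe : w = (((inner ℝ v w : ℝ)) / ‖v‖ ^ 2) • v := by
      have := sub_eq_zero.mp h
      exact this
    rw [hwe]
    exact Submodule.smul_mem _ _ (Submodule.mem_span_singleton_self v)
  have hvn0 : ‖v‖ ≠ 0 := norm_ne_zero_iff.2 hv0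
  have hvw' : (inner ℝ v w' : ℝ) = 0 := by
    rw [hw', inner_sub_right, real_inner_smul_right, real_inner_self_eq_norm_sq]
    field_simp
    ring
  set y : X := (‖v‖ / ‖w'‖) • w' with hy
  have hw'n0 : ‖w'‖ ≠ 0 := norm_ne_zero_iff.2 hw'0
  have hy0 : y ≠ 0 := smul_ne_zero (div_ne_zero hvn0 hw'n0) hw'0
  have hynorm : ‖y‖ = ‖v‖ := by
    rw [hy, norm_smul, Real.norm_eq_abs, abs_of_pos
      (div_pos (norm_pos_iff.2 hv0) (norm_pos_iff.2 hw'0))]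
    field_simp
  have hyR : ‖y‖ < R := by rw [hynorm]; exact hvR
  have hvy : (inner ℝ v y : ℝ) = 0 := by
    rw [hy, real_inner_smul_right, hvw', mul_zero]
  have hyv : (inner ℝ y v : ℝ) = 0 := by rw [real_inner_comm]; exact hvy
  have hyy : (inner ℝ y y : ℝ) = ‖v‖ ^ 2 := by
    rw [real_inner_self_eq_norm_sq, hynorm]
  set p : X := lam • (v + y) with hp
  set q : X := lam • (v - y) with hq
  have hpv : (inner ℝ p v : ℝ) = lam * ‖v‖ ^ 2 := by
    rw [hp, real_inner_smul_left, inner_add_left, real_inner_self_eq_norm_sq,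
      hyv]
    ring
  have hqv : (inner ℝ q v : ℝ) = lam * ‖v‖ ^ 2 := by
    rw [hq, real_inner_smul_left, inner_sub_left, real_inner_self_eq_norm_sq,
      hyv]
    ring
  have hp0 : p ≠ 0 := by
    intro h
    rw [h, inner_zero_left] at hpv
    have : lam * ‖v‖ ^ 2 > 0 := by positivity
    linarith [hpv ▸ this]
  have hq0 : q ≠ 0 := by
    intro h
    rw [h, inner_zero_left] at hqv
    have : lam * ‖v‖ ^ 2 > 0 := by positivity
    linarith [hqv ▸ this]
  have hpq : (inner ℝ p q : ℝ) = 0 := by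
    rw [hp, hq, real_inner_smul_left, real_inner_smul_right, inner_add_left,
      inner_sub_right, inner_sub_right, real_inner_self_eq_norm_sq,
      hvy, hyv, hyy]
    ring
  have hpnorm : ‖p‖ ≤ ‖x‖ := by
    rw [hp, norm_smul, Real.norm_eq_abs, abs_of_pos hlam0]
    calc lam * ‖v + y‖ ≤ lam * (‖v‖ + ‖y‖) :=
          mul_le_mul_of_nonneg_left (norm_add_le _ _) (le_of_lt hlam0)
      _ = lam * (2 * (c⁻¹ * ‖x‖)) := by rw [hynorm, hvnorm]; ring
      _ ≤ ‖x‖ := by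
          rw [hc]
          have h2 : lam * (2 * ((2 * lam ^ 2)⁻¹ * ‖x‖)) = lam⁻¹ * ‖x‖ := by
            field_simp
          rw [h2]
          calc lam⁻¹ * ‖x‖ ≤ 1 * ‖x‖ := by
                apply mul_le_mul_of_nonneg_right _ hxpos.le
                rw [inv_le_one_iff₀]; right; exact hlam
            _ = ‖x‖ := one_mul _
  have hpR : ‖p‖ < R := lt_of_le_of_lt hpnorm hxR
  have hqnorm : ‖q‖ ≤ ‖x‖ := by
    rw [hq, norm_smul, Real.norm_eq_abs, abs_of_pos hlam0]
    calc lam * ‖v - y‖ ≤ lam * (‖v‖ + ‖y‖) :=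
          mul_le_mul_of_nonneg_left (norm_sub_le _ _) (le_of_lt hlam0)
      _ = lam * (2 * (c⁻¹ * ‖x‖)) := by rw [hynorm, hvnorm]; ring
      _ ≤ ‖x‖ := by
          rw [hc]
          have h2 : lam * (2 * ((2 * lam ^ 2)⁻¹ * ‖x‖)) = lam⁻¹ * ‖x‖ := by
            field_simp
          rw [h2]
          calc lam⁻¹ * ‖x‖ ≤ 1 * ‖x‖ := by
                apply mul_le_mul_of_nonneg_right _ hxpos.le
                rw [inv_le_one_iff₀]; right; exact hlam
            _ = ‖x‖ := one_mul _
  have hqR : ‖q‖ < R := lt_of_le_of_lt hqnorm hxR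
  have hxeq : lam • (p + q) = x := by
    have hsum2 : p + q = (2 * lam) • v := by
      rw [hp, hq]; module
    have h3 : lam * (2 * lam) * c⁻¹ = 1 := by
      rw [hc]; field_simp
    rw [hsum2, hv, smul_smul, smul_smul, h3, one_smul]
  have hsum : ‖lam • (p + q)‖ < R := by rw [hxeq]; exact hxR
  have h1 : f (lam • (p + q)) = lam • f p + lam • f q :=
    heq p q hp0 hq0 hpR hqR hpq hsum
  have hmy0 : (-y) ≠ 0 := neg_ne_zero.2 hy0
  have hmyR : ‖-y‖ < R := by rw [norm_neg]; exact hyR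
  have hvmy : (inner ℝ v (-y) : ℝ) = 0 := by rw [inner_neg_right, hvy, neg_zero]
  have hpeq : f p = lam • f v + lam • f y :=
    heq v y hv0 hy0 hvR hyR hvy (by rw [← hp]; exact hpR)
  have hqeq : f q = lam • f v - lam • f y := by
    have hsub : v - y = v + (-y) := by abel
    have := heq v (-y) hv0 hmy0 hvR hmyR hvmy
      (by rw [← hsub, ← hq]; exact hqR)
    rw [hodd y hy0 hyR] at this
    rw [hq, hsub, this]
    rw [smul_neg]
    abel
  rw [← hxeq, h1, hpeq, hqeq, hc]
  module
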